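/- Let A be a uniformly distributed random map on 𝒜 and let b ∈ 𝒜 be any map whose image has cardinality q (1 ≤ q ≤ N). Then for every 1 ≤ p ≤ q, P(the image of A ∘ b has cardinality p) = S(q,p) · (N)_p / N^q, where S(q,p) is the Stirling number of the second kind (the number of partitions of a q-element set into p nonempty blocks) and (N)_p = N·(N−1)⋯(N−p+1). Consequently, the image-size process (|B_n({1,…,N})|)_{n≥0} of the composition chain B_n = A_n ∘ ⋯ ∘ A_0 is a Markov chain on {1,…,N} with these transition probabilities. -/

import Mathlib

open MeasureTheory

/-- Stirling numbers of the second kind: `stirling2 q p` is the number of partitions of a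
`q`-element set into `p` nonempty blocks. -/
def stirling2 : ℕ → ℕ → ℕ
  | 0, 0 => 1
  | 0, _ + 1 => 0
  | _ + 1, 0 => 0
  | n + 1, k + 1 => (k + 1) * stirling2 n (k + 1) + stirling2 n k

/-- The transition matrix `M^{(N)}_{q,p} = S(q,p) · (N)_p / N^q` (as an `ℝ≥0∞` number);
note `S(q,p) = 0` for `p > q`, so no case distinction is needed. -/
noncomputable def transMat (N q p : ℕ) : ENNReal :=
  ((stirling2 q p * Nat.descFactorial N p : ℕ) : ENNReal) / (N : ENNReal) ^ q


open Finset

lemma image_cons {q N : ℕ} (x : Fin N) (g : Fin q → Fin N) :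
    Finset.image (Fin.cons x g : Fin (q+1) → Fin N) Finset.univ
      = insert x (Finset.image g Finset.univ) := by
  ext y
  simp [Fin.exists_fin_succ, eq_comm]

lemma insert_card_iff {N p : ℕ} (t : Finset (Fin N)) (x : Fin N) :
    (insert x t).card = p + 1 ↔ ((x ∈ t ∧ t.card = p + 1) ∨ (x ∉ t ∧ t.card = p)) := by
  by_cases hx : x ∈ t
  · rw [Finset.card_insert_of_mem hx]
    constructor
    · intro h; exact Or.inl ⟨hx, h⟩
    · rintro (⟨_, h⟩ | ⟨h, _⟩)
      · exact h
      · exact absurd hx h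
  · rw [Finset.card_insert_of_notMem hx]
    constructor
    · intro h; exact Or.inr ⟨hx, by omega⟩
    · rintro (⟨h, _⟩ | ⟨_, h⟩)
      · exact absurd h hx
      · omega

lemma insert_count {N p : ℕ} (t : Finset (Fin N)) :
    (Finset.univ.filter fun x : Fin N => (insert x t).card = p + 1).card
      = (if t.card = p + 1 then p + 1 else 0) + (if t.card = p then N - p else 0) := by
  by_cases h1 : t.card = p + 1
  · have h2 : ¬ t.card = p := by omega
    have : (Finset.univ.filter fun x : Fin N => (insert x t).card = p + 1) = t := by
      ext x
      simp only [Finset.mem_filter, Finset.mem_univ, true_and, insert_card_iff, h1, h2,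
        and_true, and_false, or_false]
      have : ¬ p + 1 = p := by omega
      tauto
    rw [this, h1]
    simp [h1, h2]
  · by_cases h2 : t.card = p
    · have : (Finset.univ.filter fun x : Fin N => (insert x t).card = p + 1) = tᶜ := by
        ext x
        simp only [Finset.mem_filter, Finset.mem_univ, true_and, insert_card_iff, h1, h2,
          and_true, and_false, false_or, Finset.mem_compl]
        have : ¬ p = p + 1 := by omega
        tauto
      rw [this, Finset.card_compl, h2]
      simp [h1, Finset.card_fin]
    · have : (Finset.univ.filter fun x : Fin N => (insert x t).card = p + 1) = ∅ := by
        ext x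
        simp only [Finset.mem_filter, Finset.mem_univ, true_and, insert_card_iff, h1, h2,
          and_false, or_false, Finset.notMem_empty, iff_false, not_false_iff]
      simp [this, h1, h2]

lemma countQ (N : ℕ) : ∀ q p : ℕ,
    (Finset.univ.filter fun f : Fin q → Fin N =>
      (Finset.image f Finset.univ).card = p).card = stirling2 q p * N.descFactorial p := by
  intro q
  induction q with
  | zero =>
    intro p
    cases p with
    | zero => simp [stirling2]
    | succ p => simp [stirling2]
  | succ q ih =>
    intro p
    have key : (Finset.univ.filter fun f : Fin (q+1) → Fin N =>
        (Finset.image f Finset.univ).card = p).card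
        = ∑ g : Fin q → Fin N,
            (Finset.univ.filter fun x : Fin N =>
              (insert x (Finset.image g Finset.univ)).card = p).card := by
      calc (Finset.univ.filter fun f : Fin (q+1) → Fin N =>
              (Finset.image f Finset.univ).card = p).card
          = Fintype.card {f : Fin (q+1) → Fin N // (Finset.image f Finset.univ).card = p} :=
            (Fintype.card_subtype _).symm
        _ = Fintype.card {z : Fin N × (Fin q → Fin N) //
              (Finset.image (Fin.cons z.1 z.2 : Fin (q+1) → Fin N) Finset.univ).card = p} :=
            Fintype.card_congr
              (((Fin.consEquiv (fun _ => Fin N)).subtypeEquiv (fun z => Iff.rfl)).symm)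
        _ = (Finset.univ.filter fun z : Fin N × (Fin q → Fin N) =>
              (Finset.image (Fin.cons z.1 z.2 : Fin (q+1) → Fin N) Finset.univ).card = p).card :=
            Fintype.card_subtype _
        _ = ∑ z : Fin N × (Fin q → Fin N),
              if (Finset.image (Fin.cons z.1 z.2 : Fin (q+1) → Fin N) Finset.univ).card = p
              then 1 else 0 := Finset.card_filter _ _
        _ = ∑ x : Fin N, ∑ g : Fin q → Fin N,
              if (insert x (Finset.image g Finset.univ)).card = p then 1 else 0 := by
            rw [← Finset.univ_product_univ, Finset.sum_product]
            simp only [image_cons]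
        _ = ∑ g : Fin q → Fin N, ∑ x : Fin N,
              if (insert x (Finset.image g Finset.univ)).card = p then 1 else 0 :=
            Finset.sum_comm
        _ = ∑ g : Fin q → Fin N,
            (Finset.univ.filter fun x : Fin N =>
              (insert x (Finset.image g Finset.univ)).card = p).card :=
            Finset.sum_congr rfl (fun g _ => (Finset.card_filter _ _).symm)
    rw [key]
    cases p with
    | zero =>
      have hz : ∀ g : Fin q → Fin N,
          (Finset.univ.filter fun x : Fin N =>
            (insert x (Finset.image g Finset.univ)).card = 0).card = 0 := by
        intro g
        rw [Finset.card_eq_zero]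
        ext x
        simp
      rw [Finset.sum_congr rfl (fun g _ => hz g)]
      simp [stirling2]
    | succ k =>
      calc ∑ g : Fin q → Fin N,
            (Finset.univ.filter fun x : Fin N =>
              (insert x (Finset.image g Finset.univ)).card = k + 1).card
          = ∑ g : Fin q → Fin N,
              ((if (Finset.image g Finset.univ).card = k + 1 then k + 1 else 0)
                + (if (Finset.image g Finset.univ).card = k then N - k else 0)) :=
            Finset.sum_congr rfl (fun g _ => insert_count _)
        _ = (∑ g : Fin q → Fin N,
              if (Finset.image g Finset.univ).card = k + 1 then k + 1 else 0)
            + ∑ g : Fin q → Fin N,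
              if (Finset.image g Finset.univ).card = k then N - k else 0 :=
            Finset.sum_add_distrib
        _ = (stirling2 q (k+1) * N.descFactorial (k+1)) * (k+1)
            + (stirling2 q k * N.descFactorial k) * (N - k) := by
            rw [← Finset.sum_filter, ← Finset.sum_filter, Finset.sum_const, Finset.sum_const,
              smul_eq_mul, smul_eq_mul, ih, ih]
        _ = stirling2 (q+1) (k+1) * N.descFactorial (k+1) := by
            show _ = ((k + 1) * stirling2 q (k + 1) + stirling2 q k) * N.descFactorial (k+1)
            rw [Nat.descFactorial_succ]
            ring

lemma countT (N p : ℕ) (T : Finset (Fin N)) :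
    (Finset.univ.filter fun a : Fin N → Fin N => (T.image a).card = p).card
      = stirling2 T.card p * N.descFactorial p * N ^ (N - T.card) := by
  classical
  have h0 : ∀ a : Fin N → Fin N, T.image a
      = Finset.image (fun i : {x // x ∈ T} => a i.1) Finset.univ := by
    intro a
    ext y
    simp
  have e1 : {a : Fin N → Fin N //
        (Finset.image (fun i : {x // x ∈ T} => a i.1) Finset.univ).card = p}
      ≃ {z : ({x // x ∈ T} → Fin N) × ({x // ¬ x ∈ T} → Fin N) //
        (Finset.image z.1 Finset.univ).card = p} :=
    (Equiv.piEquivPiSubtypeProd (fun x => x ∈ T) (fun _ => Fin N)).subtypeEquiv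
      (fun a => Iff.rfl)
  have e2 : {z : ({x // x ∈ T} → Fin N) × ({x // ¬ x ∈ T} → Fin N) //
        (Finset.image z.1 Finset.univ).card = p}
      ≃ {f : {x // x ∈ T} → Fin N // (Finset.image f Finset.univ).card = p}
        × ({x // ¬ x ∈ T} → Fin N) :=
    Equiv.prodSubtypeFstEquivSubtypeProd
      (p := fun f : {x // x ∈ T} → Fin N => (Finset.image f Finset.univ).card = p)
  have ec : {x // x ∈ T} ≃ Fin T.card := T.equivFin
  have himg : ∀ f : {x // x ∈ T} → Fin N,
      Finset.image (fun j => f (ec.symm j)) Finset.univ = Finset.image f Finset.univ := by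
    intro f
    ext y
    simp only [Finset.mem_image, Finset.mem_univ, true_and]
    constructor
    · rintro ⟨j, rfl⟩; exact ⟨ec.symm j, rfl⟩
    · rintro ⟨i, rfl⟩; exact ⟨ec i, by rw [Equiv.symm_apply_apply]⟩
  have e3 : {f : {x // x ∈ T} → Fin N // (Finset.image f Finset.univ).card = p}
      ≃ {g : Fin T.card → Fin N // (Finset.image g Finset.univ).card = p} :=
    (Equiv.arrowCongr ec (Equiv.refl (Fin N))).subtypeEquiv (fun f => by
      rw [show ((Equiv.arrowCongr ec (Equiv.refl (Fin N))) f) = (fun j => f (ec.symm j))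
        from rfl, himg f])
  calc (Finset.univ.filter fun a : Fin N → Fin N => (T.image a).card = p).card
      = Fintype.card {a : Fin N → Fin N //
          (Finset.image (fun i : {x // x ∈ T} => a i.1) Finset.univ).card = p} := by
        rw [← Fintype.card_subtype]
        exact Fintype.card_congr
          (Equiv.subtypeEquiv (Equiv.refl _) (fun a => by
            rw [show ((Equiv.refl (Fin N → Fin N)) a) = a from rfl, h0]))
    _ = Fintype.card ({f : {x // x ∈ T} → Fin N // (Finset.image f Finset.univ).card = p}
        × ({x // ¬ x ∈ T} → Fin N)) := Fintype.card_congr (e1.trans e2)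
    _ = stirling2 T.card p * N.descFactorial p * N ^ (N - T.card) := by
        rw [Fintype.card_prod, Fintype.card_congr e3, Fintype.card_subtype, countQ,
          Fintype.card_fun, Fintype.card_subtype_compl, Fintype.card_coe, Fintype.card_fin]

lemma countA (N q p : ℕ) (b : Fin N → Fin N) (hq : (Finset.image b Finset.univ).card = q) :
    (Finset.univ.filter fun a : Fin N → Fin N =>
      (Finset.image (a ∘ b) Finset.univ).card = p).card
      = stirling2 q p * N.descFactorial p * N ^ (N - q) := by
  have h : ∀ a : Fin N → Fin N,
      Finset.image (a ∘ b) Finset.univ = (Finset.image b Finset.univ).image a := by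
    intro a; rw [Finset.image_image]
  calc (Finset.univ.filter fun a : Fin N → Fin N =>
        (Finset.image (a ∘ b) Finset.univ).card = p).card
      = (Finset.univ.filter fun a : Fin N → Fin N =>
        ((Finset.image b Finset.univ).image a).card = p).card := by
        apply congrArg
        apply Finset.filter_congr
        intro a _
        rw [h]
    _ = stirling2 q p * N.descFactorial p * N ^ (N - q) := by
        rw [countT, hq]

lemma measure_biUnion_eq_sum {Ω : Type*} [MeasurableSpace Ω] (P : MeasureTheory.Measure Ω)
    [MeasureTheory.IsProbabilityMeasure P]
    {ι : Type*} [Fintype ι] [DecidableEq ι] (E : ι → Set Ω) (hcover : ∀ ω, ∃ i, ω ∈ E i)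
    (htot : ∑ i : ι, P (E i) = 1) (S : Finset ι) :
    P (⋃ i ∈ S, E i) = ∑ i ∈ S, P (E i) := by
  refine le_antisymm (MeasureTheory.measure_biUnion_finset_le _ _) ?_
  have h2 : ∑ i ∈ S, P (E i) + ∑ i ∈ Sᶜ, P (E i) = 1 := by
    rw [Finset.sum_add_sum_compl]
    exact htot
  have h1 : (1:ENNReal) ≤ P (⋃ i ∈ S, E i) + ∑ i ∈ Sᶜ, P (E i) := by
    have hsub : (Set.univ : Set Ω) ⊆ (⋃ i ∈ S, E i) ∪ (⋃ i ∈ Sᶜ, E i) := by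
      intro ω _
      obtain ⟨i, hi⟩ := hcover ω
      by_cases h : i ∈ S
      · exact Or.inl (Set.mem_biUnion h hi)
      · exact Or.inr (Set.mem_biUnion (Finset.mem_compl.2 h) hi)
    calc (1:ENNReal) = P Set.univ := (MeasureTheory.measure_univ).symm
      _ ≤ P ((⋃ i ∈ S, E i) ∪ (⋃ i ∈ Sᶜ, E i)) := MeasureTheory.measure_mono hsub
      _ ≤ P (⋃ i ∈ S, E i) + P (⋃ i ∈ Sᶜ, E i) := MeasureTheory.measure_union_le _ _
      _ ≤ _ := add_le_add le_rfl (MeasureTheory.measure_biUnion_finset_le _ _)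
  have hfin : ∑ i ∈ Sᶜ, P (E i) ≠ ⊤ := by
    have hle : ∑ i ∈ Sᶜ, P (E i) ≤ 1 := h2 ▸ le_add_self
    exact (hle.trans_lt ENNReal.one_lt_top).ne
  have h3 : ∑ i ∈ S, P (E i) + ∑ i ∈ Sᶜ, P (E i)
      ≤ P (⋃ i ∈ S, E i) + ∑ i ∈ Sᶜ, P (E i) := h2.le.trans h1
  exact (ENNReal.add_le_add_iff_right hfin).mp h3

def compChain (N : ℕ) (v : ℕ → (Fin N → Fin N)) : ℕ → (Fin N → Fin N)
  | 0 => v 0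
  | n+1 => v (n+1) ∘ compChain N v n

lemma compChain_congr {N : ℕ} {u w : ℕ → (Fin N → Fin N)} {m : ℕ}
    (h : ∀ i ≤ m, u i = w i) : compChain N u m = compChain N w m := by
  induction m with
  | zero => exact h 0 le_rfl
  | succ k ih =>
    show u (k+1) ∘ compChain N u k = w (k+1) ∘ compChain N w k
    rw [h (k+1) le_rfl, ih (fun i hi => h i (hi.trans (Nat.le_succ k)))]

def extT {N M : ℕ} (v : Fin M → (Fin N → Fin N)) : ℕ → (Fin N → Fin N) :=
  fun m => if h : m < M then v ⟨m, h⟩ else id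

lemma arith (N q c : ℕ) (hN : 1 ≤ N) (hq : q ≤ N) :
    (c : ENNReal) * (N:ENNReal) ^ (N - q) * (((N:ENNReal)) ^ N)⁻¹
      = (c : ENNReal) / (N:ENNReal) ^ q := by
  have h0 : (N:ENNReal) ≠ 0 := Nat.cast_ne_zero.2 (by omega)
  have ht : (N:ENNReal) ≠ ⊤ := ENNReal.natCast_ne_top N
  have hsplit : (N:ENNReal) ^ N = (N:ENNReal) ^ q * (N:ENNReal) ^ (N - q) := by
    rw [← pow_add, Nat.add_sub_cancel' hq]
  rw [hsplit, ENNReal.mul_inv (Or.inl (pow_ne_zero _ h0)) (Or.inl (ENNReal.pow_ne_top ht))]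
  calc (c : ENNReal) * (N:ENNReal) ^ (N - q)
        * (((N:ENNReal) ^ q)⁻¹ * ((N:ENNReal) ^ (N - q))⁻¹)
      = (c : ENNReal) * ((N:ENNReal) ^ q)⁻¹
        * ((N:ENNReal) ^ (N - q) * ((N:ENNReal) ^ (N - q))⁻¹) := by ring
    _ = (c : ENNReal) * ((N:ENNReal) ^ q)⁻¹ := by
        rw [ENNReal.mul_inv_cancel (pow_ne_zero _ h0) (ENNReal.pow_ne_top ht), mul_one]
    _ = (c : ENNReal) / (N:ENNReal) ^ q := (div_eq_mul_inv _ _).symm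


/-- If `A` is a uniformly distributed random map on `𝒜 = {1,…,N}^{1,…,N}` and `b` is a map
whose image has cardinality `q`, then for every `1 ≤ p ≤ q`,
`P(|image (A ∘ b)| = p) = S(q,p) · (N)_p / N^q`.  Consequently the image-size process
`(|B_n({1,…,N})|)_n` of the composition chain `B_n = A_n ∘ ⋯ ∘ A_0` of i.i.d. uniform random
maps is a Markov chain with these transition probabilities. -/
theorem image_size_markov_chain
    (N : ℕ) (hN : 1 ≤ N)
    {Ω : Type*} [MeasurableSpace Ω] (P : Measure Ω) [IsProbabilityMeasure P]
    (A B : ℕ → Ω → (Fin N → Fin N))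
    (hunif : ∀ (p : ℕ) (a : Fin N → Fin N), P {ω | A p ω = a} = ((N : ENNReal) ^ N)⁻¹)
    (hindep : ∀ (s : Finset ℕ) (a : ℕ → (Fin N → Fin N)),
      P {ω | ∀ p ∈ s, A p ω = a p} = ∏ p ∈ s, P {ω | A p ω = a p})
    (hB0 : ∀ ω, B 0 ω = A 0 ω)
    (hBs : ∀ n ω, B (n + 1) ω = A (n + 1) ω ∘ B n ω) :
    -- one-step distribution of the image size of `A ∘ b`
    (∀ (b : Fin N → Fin N) (q p : ℕ), 1 ≤ p → p ≤ q → q ≤ N →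
      (Finset.image b Finset.univ).card = q →
      ∀ r : ℕ, P {ω | (Finset.image (A r ω ∘ b) Finset.univ).card = p} = transMat N q p) ∧
    -- Markov property of the image-size process with transition matrix `transMat N`
    (∀ (n : ℕ) (qs : ℕ → ℕ) (p : ℕ),
      P ({ω | ∀ m ≤ n, (Finset.image (B m ω) Finset.univ).card = qs m} ∩
          {ω | (Finset.image (B (n + 1) ω) Finset.univ).card = p}) =
        transMat N (qs n) p *
          P {ω | ∀ m ≤ n, (Finset.image (B m ω) Finset.univ).card = qs m}) := by
  classical
  have hNN0 : ((N:ENNReal) ^ N) ≠ 0 := pow_ne_zero _ (Nat.cast_ne_zero.2 (by omega))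
  have hNNt : ((N:ENNReal) ^ N) ≠ ⊤ := ENNReal.pow_ne_top (ENNReal.natCast_ne_top N)
  constructor
  · -- Part 1
    intro b q p hp hpq hqN hb r
    have hset : {ω | (Finset.image (A r ω ∘ b) Finset.univ).card = p}
        = ⋃ a ∈ (Finset.univ.filter fun a : Fin N → Fin N =>
            (Finset.image (a ∘ b) Finset.univ).card = p), {ω | A r ω = a} := by
      ext ω
      simp only [Set.mem_setOf_eq, Set.mem_iUnion, Finset.mem_filter, Finset.mem_univ,
        true_and, exists_prop]
      constructor
      · intro h
        exact ⟨A r ω, h, rfl⟩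
      · rintro ⟨a, ha, h2⟩
        rw [h2]
        exact ha
    rw [hset, measure_biUnion_eq_sum P _ (fun ω => ⟨A r ω, rfl⟩) ?_ _]
    · rw [Finset.sum_congr rfl (fun a _ => hunif r a), Finset.sum_const,
        countA N q p b hb, nsmul_eq_mul]
      unfold transMat
      rw [Nat.cast_mul (stirling2 q p * N.descFactorial p), Nat.cast_pow,
        arith N q _ hN hqN]
    · rw [Finset.sum_congr rfl (fun a _ => hunif r a), Finset.sum_const, Finset.card_univ,
        Fintype.card_fun, Fintype.card_fin, nsmul_eq_mul, Nat.cast_pow]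
      exact ENNReal.mul_inv_cancel hNN0 hNNt
  · -- Part 2
    intro n qs p
    have hBcc : ∀ m ω, B m ω = compChain N (fun i => A i ω) m := by
      intro m
      induction m with
      | zero => intro ω; rw [hB0]; rfl
      | succ k ih => intro ω; rw [hBs, ih]; rfl
    have hEv : ∀ (M : ℕ) (v : Fin M → (Fin N → Fin N)),
        P {ω | ∀ m : Fin M, A m.1 ω = v m} = (((N:ENNReal) ^ N)⁻¹) ^ M := by
      intro M v
      have hsame : {ω | ∀ m : Fin M, A m.1 ω = v m}
          = {ω | ∀ m ∈ Finset.range M, A m ω = extT v m} := by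
        ext ω
        simp only [Set.mem_setOf_eq, Finset.mem_range]
        constructor
        · intro h m hm
          simpa [extT, hm] using h ⟨m, hm⟩
        · intro h m
          simpa [extT, m.2] using h m.1 m.2
      rw [hsame, hindep, Finset.prod_congr rfl (fun m _ => hunif m (extT v m)),
        Finset.prod_const, Finset.card_range]
    have hcover : ∀ (M : ℕ) ω, ∃ v : Fin M → (Fin N → Fin N), ∀ m : Fin M, A m.1 ω = v m :=
      fun M ω => ⟨fun m => A m.1 ω, fun m => rfl⟩
    have htot : ∀ M : ℕ,
        ∑ v : Fin M → (Fin N → Fin N), P {ω | ∀ m : Fin M, A m.1 ω = v m} = 1 := by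
      intro M
      rw [Finset.sum_congr rfl (fun v _ => hEv M v), Finset.sum_const, Finset.card_univ,
        Fintype.card_fun, Fintype.card_fun, Fintype.card_fin, Fintype.card_fin,
        nsmul_eq_mul, Nat.cast_pow, Nat.cast_pow, ← mul_pow,
        ENNReal.mul_inv_cancel hNN0 hNNt, one_pow]
    have hext_eq : ∀ (M : ℕ) (v : Fin M → (Fin N → Fin N)) (ω : Ω)
        (hω : ∀ m : Fin M, A m.1 ω = v m) (m : ℕ) (hm : m < M),
        compChain N (extT v) m = B m ω := by
      intro M v ω hω m hm
      rw [hBcc m ω]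
      apply compChain_congr
      intro i hi
      have hiM : i < M := lt_of_le_of_lt hi hm
      simp only [extT, hiM, dif_pos]
      exact (hω ⟨i, hiM⟩).symm
    set S2 : Finset (Fin (n+1) → (Fin N → Fin N)) := Finset.univ.filter
      (fun w => ∀ m ≤ n, (Finset.image (compChain N (extT w) m) Finset.univ).card = qs m)
      with hS2
    set S1 : Finset (Fin (n+2) → (Fin N → Fin N)) := Finset.univ.filter
      (fun v => (∀ m ≤ n, (Finset.image (compChain N (extT v) m) Finset.univ).card = qs m)
        ∧ (Finset.image (compChain N (extT v) (n+1)) Finset.univ).card = p) with hS1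
    have hE : {ω | ∀ m ≤ n, (Finset.image (B m ω) Finset.univ).card = qs m}
        = ⋃ w ∈ S2, {ω | ∀ m : Fin (n+1), A m.1 ω = w m} := by
      ext ω
      simp only [Set.mem_setOf_eq, Set.mem_iUnion, exists_prop]
      constructor
      · intro h
        refine ⟨fun i => A i.1 ω, ?_, fun m => rfl⟩
        rw [hS2]
        simp only [Finset.mem_filter, Finset.mem_univ, true_and]
        intro m hm
        rw [hext_eq (n+1) _ ω (fun m => rfl) m (by omega)]
        exact h m hm
      · rintro ⟨w, hw, hω⟩
        intro m hm
        rw [hS2] at hw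
        rw [← hext_eq (n+1) w ω hω m (by omega)]
        exact (Finset.mem_filter.1 hw).2 m hm
    have hEF : ({ω | ∀ m ≤ n, (Finset.image (B m ω) Finset.univ).card = qs m} ∩
          {ω | (Finset.image (B (n + 1) ω) Finset.univ).card = p})
        = ⋃ v ∈ S1, {ω | ∀ m : Fin (n+2), A m.1 ω = v m} := by
      ext ω
      simp only [Set.mem_inter_iff, Set.mem_setOf_eq, Set.mem_iUnion, exists_prop]
      constructor
      · rintro ⟨h1, h2⟩
        refine ⟨fun i => A i.1 ω, ?_, fun m => rfl⟩
        rw [hS1]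
        simp only [Finset.mem_filter, Finset.mem_univ, true_and]
        refine ⟨fun m hm => ?_, ?_⟩
        · rw [hext_eq (n+2) _ ω (fun m => rfl) m (by omega)]
          exact h1 m hm
        · rw [hext_eq (n+2) _ ω (fun m => rfl) (n+1) (by omega)]
          exact h2
      · rintro ⟨v, hv, hω⟩
        rw [hS1] at hv
        have hv2 := (Finset.mem_filter.1 hv).2
        constructor
        · intro m hm
          rw [← hext_eq (n+2) v ω hω m (by omega)]
          exact hv2.1 m hm
        · rw [← hext_eq (n+2) v ω hω (n+1) (by omega)]
          exact hv2.2
    -- counting: card of S1 in terms of card of S2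
    have hres : ∀ (v : Fin (n+2) → (Fin N → Fin N)) (i : ℕ), i ≤ n →
        extT (fun j : Fin (n+1) => v j.castSucc) i = extT v i := by
      intro v i hi
      have h1 : i < n+1 := by omega
      have h2 : i < n+2 := by omega
      simp only [extT, h1, h2, dif_pos]
      rfl
    have hcard : S1.card = S2.card * (stirling2 (qs n) p * N.descFactorial p
        * N ^ (N - qs n)) := by
      have hmaps : ∀ v ∈ S1, (fun j : Fin (n+1) => v j.castSucc) ∈ S2 := by
        intro v hv
        rw [hS1] at hv
        have hv2 := (Finset.mem_filter.1 hv).2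
        rw [hS2]
        simp only [Finset.mem_filter, Finset.mem_univ, true_and]
        intro m hm
        rw [compChain_congr (fun i hi => hres v i (hi.trans hm))]
        exact hv2.1 m hm
      rw [Finset.card_eq_sum_card_fiberwise hmaps]
      have hfib : ∀ w ∈ S2,
          (S1.filter fun v => (fun j : Fin (n+1) => v j.castSucc) = w).card
          = stirling2 (qs n) p * N.descFactorial p * N ^ (N - qs n) := by
        intro w hw
        rw [hS2] at hw
        have hw2 := (Finset.mem_filter.1 hw).2
        have hbw : (Finset.image (compChain N (extT w) n) Finset.univ).card = qs n :=
          hw2 n le_rfl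
        rw [← countA N (qs n) p (compChain N (extT w) n) hbw]
        -- facts about elements of the fiber
        have hkey : ∀ v : Fin (n+2) → (Fin N → Fin N),
            (fun j : Fin (n+1) => v j.castSucc) = w →
            compChain N (extT v) (n+1)
              = v (Fin.last (n+1)) ∘ compChain N (extT w) n ∧
            (∀ m ≤ n, compChain N (extT v) m = compChain N (extT w) m) := by
          intro v hvw
          have hagree : ∀ i ≤ n, extT v i = extT w i := by
            intro i hi
            rw [← hvw, hres v i hi]
          have hcc : ∀ m ≤ n, compChain N (extT v) m = compChain N (extT w) m :=
            fun m hm => compChain_congr (fun i hi => hagree i (hi.trans hm))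
          refine ⟨?_, hcc⟩
          show extT v (n+1) ∘ compChain N (extT v) n = _
          rw [hcc n le_rfl]
          have : extT v (n+1) = v (Fin.last (n+1)) := by
            simp only [extT, Nat.lt_succ_self, dif_pos]
            rfl
          rw [this]
        apply Finset.card_bij (fun v _ => v (Fin.last (n+1)))
        · intro v hv
          have hv' := Finset.mem_filter.1 hv
          have hvS1 := hv'.1
          rw [hS1] at hvS1
          have hC := (Finset.mem_filter.1 hvS1).2.2
          simp only [Finset.mem_filter, Finset.mem_univ, true_and]
          rw [← (hkey v hv'.2).1]
          exact hC
        · intro v1 hv1 v2 hv2 hlast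
          have h1 := (Finset.mem_filter.1 hv1).2
          have h2 := (Finset.mem_filter.1 hv2).2
          funext j
          refine Fin.lastCases ?_ ?_ j
          · exact hlast
          · intro i
            have := congrFun (h1.trans h2.symm) i
            exact this
        · intro c hc
          simp only [Finset.mem_filter, Finset.mem_univ, true_and] at hc
          have hresnoc : (fun j : Fin (n+1) => (Fin.snoc w c : Fin (n+2) → _) j.castSucc) = w := by
            funext j
            exact Fin.snoc_castSucc _ _ _
          refine ⟨Fin.snoc w c, ?_, ?_⟩
          · apply Finset.mem_filter.2
            refine ⟨?_, hresnoc⟩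
            rw [hS1]
            simp only [Finset.mem_filter, Finset.mem_univ, true_and]
            obtain ⟨hk1, hk2⟩ := hkey (Fin.snoc w c) hresnoc
            refine ⟨fun m hm => ?_, ?_⟩
            · rw [hk2 m hm]
              exact hw2 m hm
            · rw [hk1, Fin.snoc_last]
              exact hc
          · exact Fin.snoc_last _ _
      rw [Finset.sum_congr rfl hfib, Finset.sum_const, smul_eq_mul]
    -- put everything together
    rw [hEF, measure_biUnion_eq_sum P
        (fun v : Fin (n+2) → (Fin N → Fin N) => {ω | ∀ m : Fin (n+2), A m.1 ω = v m})
        (hcover (n+2)) (htot (n+2)) S1,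
      hE, measure_biUnion_eq_sum P
        (fun w : Fin (n+1) → (Fin N → Fin N) => {ω | ∀ m : Fin (n+1), A m.1 ω = w m})
        (hcover (n+1)) (htot (n+1)) S2,
      Finset.sum_congr rfl (fun v _ => hEv (n+2) v),
      Finset.sum_congr rfl (fun w _ => hEv (n+1) w),
      Finset.sum_const, Finset.sum_const, nsmul_eq_mul, nsmul_eq_mul, hcard]
    rcases Finset.eq_empty_or_nonempty S2 with hS2e | hS2e
    · rw [hS2e]
      simp
    · obtain ⟨w, hw⟩ := hS2e
      rw [hS2] at hw
      have hbw : (Finset.image (compChain N (extT w) n) Finset.univ).card = qs n :=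
        (Finset.mem_filter.1 hw).2 n le_rfl
      have hqN : qs n ≤ N := by
        rw [← hbw]
        calc (Finset.image (compChain N (extT w) n) Finset.univ).card
            ≤ (Finset.univ : Finset (Fin N)).card := Finset.card_le_univ _
          _ = N := by rw [Finset.card_univ, Fintype.card_fin]
      unfold transMat
      rw [Nat.cast_mul (S2.card), Nat.cast_mul (stirling2 (qs n) p * N.descFactorial p),
        Nat.cast_pow]
      calc (↑S2.card * (↑(stirling2 (qs n) p * N.descFactorial p)
              * (N:ENNReal) ^ (N - qs n))) * (((N:ENNReal) ^ N)⁻¹) ^ (n + 2)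
          = (↑(stirling2 (qs n) p * N.descFactorial p) * (N:ENNReal) ^ (N - qs n)
              * (((N:ENNReal) ^ N)⁻¹))
            * (↑S2.card * (((N:ENNReal) ^ N)⁻¹) ^ (n + 1)) := by
            rw [pow_succ]
            ring
        _ = (↑(stirling2 (qs n) p * N.descFactorial p) / (N:ENNReal) ^ (qs n))
            * (↑S2.card * (((N:ENNReal) ^ N)⁻¹) ^ (n + 1)) := by
            rw [arith N (qs n) _ hN hqN]
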